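/- Rotation number via the Euler cocycle: let F be a unit of the monoid CircleDeg1Lift (i.e. F ∈ Homeo_ℤ(ℝ), an orientation-preserving homeomorphism of ℝ commuting with integer translations) with F(0) ∈ [0, 1), so that F is the normalized lift of an orientation-preserving circle homeomorphism g. Then the translation number τ(F) satisfies τ(F) = lim_{n→∞} (1/n) · Σ_{k=0}^{n−1} ⌊F(Frac(F^k(0)))⌋, where Frac denotes the fractional part and ⌊·⌋ the floor; that is, the sequence n ↦ (Σ_{k=0}^{n−1} ⌊F(Int.fract((F^k)(0)))⌋)/n converges to the translation number of F. (Each summand ⌊F(Frac(F^k(0)))⌋ ∈ {0,1} is the value eu⁰(g, g^k) of the Euler cocycle based at 0.) -/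

import Mathlib

open Filter

/-- **Rotation number via the Euler cocycle.**  Let `F ∈ Homeo_ℤ(ℝ) = CircleDeg1Liftˣ` be
normalized so that `F(0) ∈ [0,1)` (`F` is the normalized lift of a circle homeomorphism
`g`).  Then the translation number of `F` is the limit of the Birkhoff averages of the
Euler cocycle based at `0`:
`τ(F) = lim_{n→∞} (1/n) Σ_{k=0}^{n−1} ⌊F(Frac(F^k(0)))⌋`,
where `⌊F(Frac(F^k(0)))⌋ ∈ {0,1}` is the value `eu⁰(g, g^k)`. -/
theorem translationNumber_eq_limit_euler_cocycle (F : CircleDeg1Liftˣ)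
    (hF : (F : CircleDeg1Lift) 0 ∈ Set.Ico (0 : ℝ) 1) :
    Tendsto
      (fun n : ℕ =>
        ((∑ k ∈ Finset.range n,
            ⌊(F : CircleDeg1Lift) (Int.fract (((F : CircleDeg1Lift) ^ k) 0))⌋ : ℤ) : ℝ) / n)
      atTop (nhds ((F : CircleDeg1Lift).translationNumber)) := by
  set f := (F : CircleDeg1Lift) with hf
  have key : ∀ n : ℕ,
      (∑ k ∈ Finset.range n, ⌊f (Int.fract ((f ^ k) 0))⌋) = ⌊(f ^ n) 0⌋ := by
    intro n
    have h : ∀ k : ℕ, ⌊f (Int.fract ((f ^ k) 0))⌋ = ⌊(f ^ (k + 1)) 0⌋ - ⌊(f ^ k) 0⌋ := by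
      intro k
      rw [Int.fract, f.map_sub_int, Int.floor_sub_intCast, pow_succ']
      rfl
    calc (∑ k ∈ Finset.range n, ⌊f (Int.fract ((f ^ k) 0))⌋)
        = ∑ k ∈ Finset.range n, (⌊(f ^ (k + 1)) 0⌋ - ⌊(f ^ k) 0⌋) :=
          Finset.sum_congr rfl fun k _ => h k
      _ = ⌊(f ^ n) 0⌋ - ⌊(f ^ 0) 0⌋ := Finset.sum_range_sub (fun k => ⌊(f ^ k) 0⌋) n
      _ = ⌊(f ^ n) 0⌋ := by simp
  have h1 : Tendsto (fun n : ℕ => (f ^ n) 0 / n) atTop (nhds f.translationNumber) :=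
    f.tendsto_translation_number₀
  have h2 : Tendsto (fun n : ℕ => ((⌊(f ^ n) 0⌋ : ℝ) - (f ^ n) 0) / n) atTop (nhds 0) := by
    refine squeeze_zero_norm (fun n => ?_) tendsto_one_div_atTop_nhds_zero_nat
    rcases Nat.eq_zero_or_pos n with h | h
    · simp [h]
    · rw [norm_div, Real.norm_natCast]
      have hb : ‖(⌊(f ^ n) 0⌋ : ℝ) - (f ^ n) 0‖ ≤ 1 := by
        rw [Real.norm_eq_abs, abs_sub_comm, Int.self_sub_floor,
          abs_of_nonneg (Int.fract_nonneg _)]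
        exact (Int.fract_lt_one _).le
      gcongr
  have h3 := h1.add h2
  rw [add_zero] at h3
  refine h3.congr fun n => ?_
  rw [← add_div, add_sub_cancel, key n]
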